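/- The Löwner function commutes with affine maps: if L(f)(x) = e^{−‖A₀x‖+t₀} is the Löwner function of f ∈ LC, then for every nonsingular affine map B, L(Bf) = B(L(f)), i.e., L(Bf)(x) = e^{−‖A₀Bx‖+t₀}. -/

import Mathlib

open MeasureTheory Filter
noncomputable section

/-- `ℝⁿ` as a Euclidean space. -/
abbrev Euc (n : ℕ) := EuclideanSpace ℝ (Fin n)

/-- `f` is a non-degenerate, upper semicontinuous, integrable log-concave
function on `ℝⁿ` (the class `LC`): `f ≥ 0`, `f` is upper semicontinuous,
log-concave, integrable with `0 < ∫ f`, and the interior of its support is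
non-empty. -/
def IsLC {n : ℕ} (f : Euc n → ℝ) : Prop :=
  (∀ x, 0 ≤ f x) ∧ UpperSemicontinuous f ∧
  (∀ x y : Euc n, ∀ a b : ℝ, 0 ≤ a → 0 ≤ b → a + b = 1 →
      f x ^ a * f y ^ b ≤ f (a • x + b • y)) ∧
  Integrable f ∧ 0 < ∫ x, f x ∧ (interior (Function.support f)).Nonempty

/-- `(A, t)` is a Löwner pair for `f`: `A` is a nonsingular affine map,
`e^{−(‖Ax‖−t)} ≥ f(x)` for all `x` (the constraint `‖Ax‖ − t ≤ ψ(x)`), and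
`∫ e^{−‖Ax‖+t} dx` is minimal among all admissible pairs; the Löwner
function of `f` is then `L(f)(x) = e^{−‖Ax‖+t}`. -/
def IsLownerPair {n : ℕ} (f : Euc n → ℝ) (A : Euc n →ᵃ[ℝ] Euc n) (t : ℝ) : Prop :=
  Function.Bijective A ∧ (∀ x, f x ≤ Real.exp (-‖A x‖ + t)) ∧
  ∀ (A' : Euc n →ᵃ[ℝ] Euc n) (t' : ℝ), Function.Bijective A' →
    (∀ x, f x ≤ Real.exp (-‖A' x‖ + t')) →
    ∫ x, Real.exp (-‖A x‖ + t) ≤ ∫ x, Real.exp (-‖A' x‖ + t')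

lemma integral_comp_linearEquiv' {n : ℕ} (L : Euc n ≃ₗ[ℝ] Euc n) (g : Euc n → ℝ) :
    ∫ x, g (L x) = |LinearMap.det (L : Euc n →ₗ[ℝ] Euc n)|⁻¹ * ∫ x, g x := by
  have hd : LinearMap.det (L : Euc n →ₗ[ℝ] Euc n) ≠ 0 := L.isUnit_det'.ne_zero
  have hmap : Measure.map (L : Euc n →ₗ[ℝ] Euc n) (volume : Measure (Euc n)) =
      ENNReal.ofReal |(LinearMap.det (L : Euc n →ₗ[ℝ] Euc n))⁻¹| • volume :=
    Measure.map_linearMap_addHaar_eq_smul_addHaar volume hd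
  have key := MeasureTheory.integral_map_equiv
    (L.toContinuousLinearEquiv.toHomeomorph.toMeasurableEquiv) g (μ := volume)
  have hco : ⇑(L.toContinuousLinearEquiv.toHomeomorph.toMeasurableEquiv) = ⇑L := rfl
  rw [hco] at key
  have hmap' : Measure.map (⇑L) (volume : Measure (Euc n)) =
      ENNReal.ofReal |(LinearMap.det (L : Euc n →ₗ[ℝ] Euc n))⁻¹| • volume := by
    simpa using hmap
  rw [hmap'] at key
  rw [← key, integral_smul_measure, ENNReal.toReal_ofReal (abs_nonneg _),
    abs_inv]
  simp [smul_eq_mul]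

lemma integral_comp_affineEquiv' {n : ℕ} (B : Euc n ≃ᵃ[ℝ] Euc n) (g : Euc n → ℝ) :
    ∫ x, g (B x) = |LinearMap.det (B.linear : Euc n →ₗ[ℝ] Euc n)|⁻¹ * ∫ x, g x := by
  have hdec : ∀ x, B x = B.linear x + B 0 := by
    intro x
    have := AffineMap.decomp (B.toAffineMap)
    have hx := congrFun this x
    simpa using hx
  have hfe : (fun x => g (B x)) = fun x => (fun y => g (y + B 0)) (B.linear x) :=
    funext fun x => by rw [hdec x]
  have h2 := integral_comp_linearEquiv' B.linear (fun y => g (y + B 0))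
  calc ∫ x, g (B x) = ∫ x, (fun y => g (y + B 0)) (B.linear x) := by rw [hfe]
    _ = |LinearMap.det (B.linear : Euc n →ₗ[ℝ] Euc n)|⁻¹ * ∫ x, g (x + B 0) := h2
    _ = |LinearMap.det (B.linear : Euc n →ₗ[ℝ] Euc n)|⁻¹ * ∫ x, g x := by
        rw [integral_add_right_eq_self g (B 0)]

/-- the Löwner function commutes with nonsingular affine maps:
if `L(f)(x) = e^{−‖A₀x‖+t₀}` then `L(Bf)(x) = e^{−‖A₀Bx‖+t₀} = B(L(f))(x)`,
i.e. `(A₀ ∘ B, t₀)` is a Löwner pair for `Bf`. -/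
theorem loewner_affine_covariant (n : ℕ) (f : Euc n → ℝ) (hf : IsLC f)
    (A₀ : Euc n →ᵃ[ℝ] Euc n) (t₀ : ℝ) (h : IsLownerPair f A₀ t₀)
    (B : Euc n ≃ᵃ[ℝ] Euc n) :
    IsLownerPair (fun x => f (B x)) (A₀.comp B.toAffineMap) t₀ := by
  obtain ⟨hbij, hle, hmin⟩ := h
  have hdet : LinearMap.det (B.linear : Euc n →ₗ[ℝ] Euc n) ≠ 0 :=
    B.linear.isUnit_det'.ne_zero
  have hcpos : (0:ℝ) < |LinearMap.det (B.linear : Euc n →ₗ[ℝ] Euc n)|⁻¹ := by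
    positivity
  refine ⟨?_, ?_, ?_⟩
  · exact hbij.comp B.bijective
  · intro x
    simpa using hle (B x)
  · intro A' t' hA'bij hA'le
    -- transfer A' to an admissible pair for f
    have hbij' : Function.Bijective (A'.comp B.symm.toAffineMap) :=
      hA'bij.comp B.symm.bijective
    have hle' : ∀ x, f x ≤ Real.exp (-‖(A'.comp B.symm.toAffineMap) x‖ + t') := by
      intro x
      have := hA'le (B.symm x)
      simpa using this
    have hI := hmin _ _ hbij' hle'
    have e1 : ∫ x, Real.exp (-‖(A₀.comp B.toAffineMap) x‖ + t₀) =
        |LinearMap.det (B.linear : Euc n →ₗ[ℝ] Euc n)|⁻¹ *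
          ∫ x, Real.exp (-‖A₀ x‖ + t₀) := by
      have := integral_comp_affineEquiv' B (fun y => Real.exp (-‖A₀ y‖ + t₀))
      simpa using this
    have e2 : ∫ x, Real.exp (-‖(A'.comp B.symm.toAffineMap) x‖ + t') =
        |LinearMap.det (B.linear : Euc n →ₗ[ℝ] Euc n)| *
          ∫ x, Real.exp (-‖A' x‖ + t') := by
      have := integral_comp_affineEquiv' B.symm (fun y => Real.exp (-‖A' y‖ + t'))
      have hds : LinearMap.det ((B.symm.linear : Euc n ≃ₗ[ℝ] Euc n) : Euc n →ₗ[ℝ] Euc n) =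
          (LinearMap.det (B.linear : Euc n →ₗ[ℝ] Euc n))⁻¹ := by
        rw [AffineEquiv.linear_symm]
        exact LinearEquiv.det_coe_symm B.linear
      rw [hds] at this
      rw [abs_inv, inv_inv] at this
      simpa using this
    rw [e1]
    rw [e2] at hI
    calc |LinearMap.det (B.linear : Euc n →ₗ[ℝ] Euc n)|⁻¹ * ∫ x, Real.exp (-‖A₀ x‖ + t₀)
        ≤ |LinearMap.det (B.linear : Euc n →ₗ[ℝ] Euc n)|⁻¹ *
          (|LinearMap.det (B.linear : Euc n →ₗ[ℝ] Euc n)| * ∫ x, Real.exp (-‖A' x‖ + t')) :=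
          by exact mul_le_mul_of_nonneg_left hI hcpos.le
    _ = ∫ x, Real.exp (-‖A' x‖ + t') := by
          field_simp
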